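/- Assume n is even and SO(n,k,β) is friendly. Let k̄ be an algebraic closure of k and let A ∈ GL(n, k̄) satisfy Aᵀ·M̄·A = M̄. If for every X ∈ SO(n,k,β) there exists X' ∈ SO(n,k,β) with A⁻¹·ι(X)·A = ι(X'), then there exist α ∈ k nonzero and s ∈ k̄ with s² = ι(α) such that every entry of A is of the form c·s with c in the image of k; that is, A = s·ι(A₀) for some matrix A₀ ∈ M_n(k). -/

import Mathlib

open Matrix
set_option linter.unusedSectionVars false
set_option maxHeartbeats 1000000
section
variable {n : Type*} [Fintype n] [DecidableEq n] {k : Type*} [Field k]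

def rotM (i j : n) (x y c : k) : Matrix n n k :=
  1 + single i i (x - 1) + single j j (x - 1) + single j i y
    + single i j (-(c * y))

def sgnM (a b : n) : Matrix n n k := diagonal (fun u => if u = a then -1 else if u = b then -1 else 1)

lemma diag_mul_std (m : n → k) (a b : n) (c : k) :
    diagonal m * single a b c = single a b (m a * c) := by
  ext r s
  rw [diagonal_mul]
  simp only [single, of_apply]
  split_ifs with h
  · rw [← h.1]
  · exact mul_zero _

lemma std_mul_diag (m : n → k) (a b : n) (c : k) :
    single a b c * diagonal m = single a b (c * m b) := by
  ext r s
  rw [mul_diagonal]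
  simp only [single, of_apply]
  split_ifs with h
  · rw [← h.2]
  · exact zero_mul _


lemma std_transpose (a b : n) (c : k) :
    (single a b c)ᵀ = single b a c := by
  ext r s
  simp only [transpose_apply, single, of_apply, and_comm]


lemma rotM_eq (i j : n) (hij : i ≠ j) (x y c : k) (hy : y ≠ 0)
    (hxy : x ^ 2 + c * y ^ 2 = 1) :
    rotM i j x y c =
      transvection i j ((x - 1) / y) * transvection j i y * transvection i j ((x - 1) / y) := by
  have h1 : ∀ (p q : n) (c d : k), single p i c * single j q d = 0 :=
    fun p q c d => single_mul_single_of_ne c p i j hij d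
  have h2 : ∀ (p q : n) (c d : k), single p j c * single i q d = 0 :=
    fun p q c d => single_mul_single_of_ne c p j i hij.symm d
  have e1 : (x - 1) / y * y = x - 1 := div_mul_cancel₀ _ hy
  have e2 : y * ((x - 1) / y) = x - 1 := by field_simp
  have hsplit : single i j (-(c * y)) = single i j ((x - 1) / y)
      + single i j ((x - 1) / y) + single i j ((x - 1) * ((x - 1) / y)) := by
    have hco : -(c * y) = (x - 1) / y + (x - 1) / y + (x - 1) * ((x - 1) / y) := by
      field_simp
      linear_combination -hxy
    rw [← single_add, ← single_add, ← hco]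
  simp only [transvection, rotM]
  simp only [add_mul, mul_add, one_mul, mul_one, single_mul_single_same, h1, h2, add_zero,
    zero_add]
  rw [e1, e2, hsplit]
  abel


lemma rotM_det (i j : n) (hij : i ≠ j) (x y c : k) (hy : y ≠ 0)
    (hxy : x ^ 2 + c * y ^ 2 = 1) : (rotM i j x y c).det = 1 := by
  rw [rotM_eq i j hij x y c hy hxy, det_mul, det_mul, det_transvection_of_ne _ _ hij,
    det_transvection_of_ne _ _ hij.symm]
  ring

lemma rotM_orth (i j : n) (hij : i ≠ j) (m : n → k) (x y c : k)
    (hc : m j = c * m i) (hxy : x ^ 2 + c * y ^ 2 = 1) :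
    (rotM i j x y c)ᵀ * diagonal m * rotM i j x y c = diagonal m := by
  have h1 : ∀ (p q : n) (c d : k), single p i c * single j q d = 0 :=
    fun p q c d => single_mul_single_of_ne c p i j hij d
  have h2 : ∀ (p q : n) (c d : k), single p j c * single i q d = 0 :=
    fun p q c d => single_mul_single_of_ne c p j i hij.symm d
  simp only [rotM, transpose_add, transpose_one, std_transpose]
  simp only [add_mul, mul_add, one_mul, mul_one, diag_mul_std, std_mul_diag,
    single_mul_single_same, h1, h2, add_zero, zero_add]
  ext r s
  rcases eq_or_ne i r with rfl|hir
  · rcases eq_or_ne i s with rfl|his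
    · simp [Matrix.add_apply, single_apply_same, single_apply_of_ne, diagonal_apply, hij, hij.symm]
      linear_combination m i * hxy + y ^ 2 * hc
    · rcases eq_or_ne j s with rfl|hjs
      · simp [Matrix.add_apply, single_apply_same, single_apply_of_ne, diagonal_apply, hij, hij.symm, his]
        linear_combination x * y * hc
      · simp [Matrix.add_apply, single_apply_same, single_apply_of_ne, diagonal_apply, hij, hij.symm, his, hjs]
  · rcases eq_or_ne j r with rfl|hjr
    · rcases eq_or_ne i s with rfl|his
      · simp [Matrix.add_apply, single_apply_same, single_apply_of_ne, diagonal_apply, hij, hij.symm, hir]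
        linear_combination x * y * hc
      · rcases eq_or_ne j s with rfl|hjs
        · simp [Matrix.add_apply, single_apply_same, single_apply_of_ne, diagonal_apply, hij, hij.symm, hir, his]
          linear_combination m j * hxy - c * y ^ 2 * hc
        · simp [Matrix.add_apply, single_apply_same, single_apply_of_ne, diagonal_apply, hij, hij.symm, hir, his, hjs]
    · simp [Matrix.add_apply, single_apply_same, single_apply_of_ne, diagonal_apply, hir, hjr]

lemma sgnM_orth (a b : n) (m : n → k) :
    (sgnM a b)ᵀ * diagonal m * (sgnM a b : Matrix n n k) = diagonal m := by
  rw [sgnM, diagonal_transpose, diagonal_mul_diagonal, diagonal_mul_diagonal]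
  ext r s
  simp only [diagonal_apply]
  split_ifs <;> ring

lemma sgnM_det (a b : n) (hab : a ≠ b) : (sgnM a b : Matrix n n k).det = 1 := by
  rw [sgnM, det_diagonal, ← Finset.mul_prod_erase _ _ (Finset.mem_univ a),
    ← Finset.mul_prod_erase _ _ (Finset.mem_erase.mpr ⟨hab.symm, Finset.mem_univ b⟩)]
  rw [Finset.prod_eq_one (fun u hu => by
    simp only [Finset.mem_erase] at hu
    simp [hu.1, hu.2.1])]
  simp [hab.symm]

lemma sub_sgnM (a b : n) (hab : a ≠ b) :
    (1 : Matrix n n k) - sgnM a b = single a a 2 + single b b 2 := by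
  ext r s
  simp only [Matrix.sub_apply, Matrix.add_apply, one_apply, sgnM, diagonal_apply, single_eq_of_single_single, of_apply, Pi.single_apply]
  split_ifs <;> (try subst_vars) <;> (try simp only [Pi.single_apply, Pi.zero_apply]) <;> (try split_ifs) <;> (try subst_vars) <;> first | ring1 | simp_all

lemma pair_sum (a b c : n) (hab : a ≠ b) (hac : a ≠ c) (hbc : b ≠ c) :
    (single a a (1:k) + single b b 1) +
      ((single a a (1:k) + single c c 1) -
        (single b b (1:k) + single c c 1)) = single a a 2 := by
  ext r s
  simp only [Matrix.sub_apply, Matrix.add_apply, single_eq_of_single_single, of_apply, Pi.single_apply]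
  split_ifs <;> (try subst_vars) <;> (try simp only [Pi.single_apply, Pi.zero_apply]) <;> (try split_ifs) <;> (try subst_vars) <;> first | ring1 | simp_all

lemma rotM_sub (i j : n) (x y c : k) :
    rotM i j x y c - rotM i j x (-y) c
      = single j i (2*y) + single i j (-(c*(2*y))) := by
  ext r s
  simp only [rotM, Matrix.sub_apply, Matrix.add_apply, one_apply, single_eq_of_single_single, of_apply, Pi.single_apply]
  split_ifs <;> (try subst_vars) <;> (try simp only [Pi.single_apply, Pi.zero_apply]) <;> (try split_ifs) <;> (try subst_vars) <;> first | ring1 | simp_all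

lemma rot_sum (p q : n) (y c : k) :
    (single p q (2*y) + single q p (-(c*(2*y)))) +
      (single p q (2*y) + single q p (c*(2*y))) = single p q (4*y) := by
  ext r s
  simp only [Matrix.add_apply, single_eq_of_single_single, of_apply, Pi.single_apply]
  split_ifs <;> (try subst_vars) <;> (try simp only [Pi.single_apply, Pi.zero_apply]) <;> (try split_ifs) <;> (try subst_vars) <;> first | ring1 | simp_all

lemma span_so (hchar : (2:k) ≠ 0) (m : n → k) (hm : ∀ u, m u ≠ 0)
    (hfr : ∀ s t : n, ∃ x y : k, y ≠ 0 ∧ x ^ 2 + (m s / m t) * y ^ 2 = 1)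
    (h3 : ∀ i j : n, ∃ l, l ≠ i ∧ l ≠ j)
    (S : Submodule k (Matrix n n k))
    (hS : ∀ X : Matrix n n k, Xᵀ * diagonal m * X = diagonal m → X.det = 1 → X ∈ S)
    (B : Matrix n n k) : B ∈ S := by
  have hI : (1 : Matrix n n k) ∈ S := hS 1 (by simp) (by simp)
  have hsgn : ∀ a b : n, a ≠ b → (sgnM a b : Matrix n n k) ∈ S := fun a b hab =>
    hS _ (sgnM_orth a b m) (sgnM_det a b hab)
  have hpair : ∀ a b : n, a ≠ b →
      single a a (1:k) + single b b 1 ∈ S := by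
    intro a b hab
    have h := S.smul_mem (2:k)⁻¹ (S.sub_mem hI (hsgn a b hab))
    rw [sub_sgnM a b hab, smul_add, smul_single, smul_single,
      show (2:k)⁻¹ • (2:k) = 1 from by rw [smul_eq_mul, inv_mul_cancel₀ hchar]] at h
    exact h
  have hdiag : ∀ (a : n) (w : k), single a a w ∈ S := by
    intro a w
    obtain ⟨b, hb, -⟩ := h3 a a
    obtain ⟨c, hc, hcb⟩ := h3 a b
    have h := S.smul_mem (2:k)⁻¹
      (S.add_mem (hpair a b hb.symm)
        (S.sub_mem (hpair a c hc.symm) (hpair b c hcb.symm)))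
    rw [pair_sum a b c hb.symm hc.symm hcb.symm, smul_single,
      show (2:k)⁻¹ • (2:k) = 1 from by rw [smul_eq_mul, inv_mul_cancel₀ hchar]] at h
    have h2 := S.smul_mem w h
    rwa [smul_single, show w • (1:k) = w from by rw [smul_eq_mul, mul_one]] at h2
  have hoff : ∀ (p q : n), p ≠ q → ∀ w : k, single p q w ∈ S := by
    intro p q hpq w
    obtain ⟨x, y, hy, hxy⟩ := hfr p q
    set c := m p / m q with hcdef
    have hc : m p = c * m q := by
      rw [hcdef, div_mul_cancel₀ _ (hm q)]
    have hxy' : x ^ 2 + c * (-y) ^ 2 = 1 := by linear_combination hxy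
    have hR1 : rotM q p x y c ∈ S :=
      hS _ (rotM_orth q p hpq.symm m x y c hc hxy) (rotM_det q p hpq.symm x y c hy hxy)
    have hR2 : rotM q p x (-y) c ∈ S :=
      hS _ (rotM_orth q p hpq.symm m x (-y) c hc hxy')
        (rotM_det q p hpq.symm x (-y) c (neg_ne_zero.mpr hy) hxy')
    obtain ⟨l, hlq, hlp⟩ := h3 q p
    have hDmul : ∀ X : Matrix n n k, Xᵀ * diagonal m * X = diagonal m → X.det = 1 →
        ((sgnM q l : Matrix n n k) * X) ∈ S := by
      intro X hX hdX
      apply hS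
      · calc ((sgnM q l : Matrix n n k) * X)ᵀ * diagonal m * ((sgnM q l : Matrix n n k) * X)
            = Xᵀ * ((sgnM q l)ᵀ * diagonal m * (sgnM q l : Matrix n n k)) * X := by
              simp only [transpose_mul, Matrix.mul_assoc]
          _ = Xᵀ * diagonal m * X := by rw [sgnM_orth]
          _ = diagonal m := hX
      · rw [det_mul, sgnM_det q l hlq.symm, hdX, mul_one]
    have hDR1 := hDmul _ (rotM_orth q p hpq.symm m x y c hc hxy) (rotM_det q p hpq.symm x y c hy hxy)
    have hDR2 := hDmul _ (rotM_orth q p hpq.symm m x (-y) c hc hxy')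
      (rotM_det q p hpq.symm x (-y) c (neg_ne_zero.mpr hy) hxy')
    have hs1 := S.sub_mem hR1 hR2
    rw [rotM_sub] at hs1
    have hs2 := S.sub_mem hDR1 hDR2
    rw [← Matrix.mul_sub, rotM_sub] at hs2
    have e1 : (sgnM q l : Matrix n n k) * single p q (2*y) = single p q (2*y) := by
      rw [sgnM, diag_mul_std,
        show (if p = q then (-1:k) else if p = l then -1 else 1) = 1 by rw [if_neg hpq, if_neg hlp.symm],
        one_mul]
    have e2 : (sgnM q l : Matrix n n k) * single q p (-(c*(2*y)))
        = single q p (c*(2*y)) := by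
      rw [sgnM, diag_mul_std, if_pos rfl, show (-1:k) * (-(c*(2*y))) = c*(2*y) by ring]
    rw [Matrix.mul_add, e1, e2] at hs2
    have hs3 := S.add_mem hs1 hs2
    rw [rot_sum] at hs3
    have h4y : (4:k) * y ≠ 0 := by
      refine mul_ne_zero ?_ hy
      have : (4:k) = 2 * 2 := by norm_num
      rw [this]
      exact mul_ne_zero hchar hchar
    have h5 := S.smul_mem (w / ((4:k)*y)) hs3
    rwa [smul_single,
      show (w / ((4:k)*y)) • ((4:k)*y) = w from by rw [smul_eq_mul, div_mul_cancel₀ _ h4y]] at h5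
  rw [matrix_eq_sum_single B]
  refine Submodule.sum_mem _ fun p _ => Submodule.sum_mem _ fun q _ => ?_
  rcases eq_or_ne p q with rfl|h
  · exact hdiag p _
  · exact hoff p q h _

lemma map_smul_alg {K : Type*} [Field K] [Algebra k K] (c : k) (X : Matrix n n k) :
    ((c • X).map (algebraMap k K)) = algebraMap k K c • (X.map (algebraMap k K)) := by
  ext r s
  simp [Matrix.map_apply, Matrix.smul_apply, smul_eq_mul, _root_.map_mul]

lemma map_std_alg {K : Type*} [Field K] [Algebra k K] (p q : n) :
    (single p q (1:k)).map (algebraMap k K) = single p q (1:K) := by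
  ext r s
  simp [Matrix.map_apply, single, apply_ite (algebraMap k K)]

end

/-- When `n` is even and `A ∈ O(n, k̄, β)` is such that `Inn_A` leaves `SO(n,k,β)`
invariant, every entry of `A` is a `k`-multiple of a fixed square root `s` of some
nonzero `α ∈ k`. -/
theorem inn_invariant_so_even_entries {k K : Type*} [Field k] [Field K] [Algebra k K]
    [IsAlgClosure k K]
    (hchar : (2 : k) ≠ 0) {n : ℕ} (hn : 2 < n) (heven : Even n)
    (M : Matrix (Fin n) (Fin n) k) (hMdiag : M.IsDiag) (hM : IsUnit M)
    (hfriendly : ∀ s t : Fin n, ∃ x y : k, y ≠ 0 ∧ x ^ 2 + (M s s / M t t) * y ^ 2 = 1)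
    (A : Matrix (Fin n) (Fin n) K) (hA : IsUnit A)
    (hAorth : Aᵀ * M.map (algebraMap k K) * A = M.map (algebraMap k K))
    (hinv : ∀ X : Matrix (Fin n) (Fin n) k, Xᵀ * M * X = M → X.det = 1 →
      ∃ X' : Matrix (Fin n) (Fin n) k, X'ᵀ * M * X' = M ∧ X'.det = 1 ∧
        A⁻¹ * X.map (algebraMap k K) * A = X'.map (algebraMap k K)) :
    ∃ α : k, α ≠ 0 ∧ ∃ s : K, s ^ 2 = algebraMap k K α ∧
      ∃ A₀ : Matrix (Fin n) (Fin n) k, A = s • A₀.map (algebraMap k K) := by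
  classical
  have i0 : Fin n := ⟨0, by omega⟩
  set f : k →+* K := algebraMap k K with hfdef
  have hfinj : Function.Injective f := f.injective
  set Φ : Matrix (Fin n) (Fin n) k →+* Matrix (Fin n) (Fin n) K := f.mapMatrix with hΦdef
  have hΦapp : ∀ X : Matrix (Fin n) (Fin n) k, Φ X = X.map f := fun _ => rfl
  have hΦinj : Function.Injective Φ := Matrix.map_injective hfinj
  have hMd : M = diagonal M.diag := (hMdiag.diagonal_diag).symm
  have hm : ∀ u, M.diag u ≠ 0 := by
    intro u hu
    have hdet : IsUnit M.det := (isUnit_iff_isUnit_det M).mp hM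
    rw [hMd, det_diagonal] at hdet
    rw [isUnit_iff_ne_zero] at hdet
    exact hdet (Finset.prod_eq_zero (Finset.mem_univ u) hu)
  -- basic facts about A
  have hAdet : IsUnit A.det := (isUnit_iff_isUnit_det A).mp hA
  have hAl : A⁻¹ * A = 1 := nonsing_inv_mul A hAdet
  have hAr : A * A⁻¹ = 1 := mul_nonsing_inv A hAdet
  -- the submodule of matrices whose conjugate is defined over k
  let S : Submodule k (Matrix (Fin n) (Fin n) k) :=
    { carrier := {X | ∃ Y, A⁻¹ * Φ X * A = Φ Y}
      add_mem' := by
        rintro X₁ X₂ ⟨Y₁, h₁⟩ ⟨Y₂, h₂⟩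
        exact ⟨Y₁ + Y₂, by rw [map_add, map_add, Matrix.mul_add, Matrix.add_mul, h₁, h₂]⟩
      zero_mem' := ⟨0, by simp⟩
      smul_mem' := by
        rintro c X ⟨Y, h⟩
        refine ⟨c • Y, ?_⟩
        rw [hΦapp, hΦapp, map_smul_alg, map_smul_alg, Matrix.mul_smul, Matrix.smul_mul,
          ← hΦapp, ← hΦapp, h] }
  have h3 : ∀ i j : Fin n, ∃ l : Fin n, l ≠ i ∧ l ≠ j := by
    intro i j
    have h0 : (0 : ℕ) < n := by omega
    have h1 : (1 : ℕ) < n := by omega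
    have h2 : (2 : ℕ) < n := by omega
    set u0 : Fin n := ⟨0, h0⟩
    set u1 : Fin n := ⟨1, h1⟩
    set u2 : Fin n := ⟨2, h2⟩
    have h01 : u0 ≠ u1 := by simp [u0, u1, Fin.ext_iff]
    have h02 : u0 ≠ u2 := by simp [u0, u2, Fin.ext_iff]
    have h12 : u1 ≠ u2 := by simp [u1, u2, Fin.ext_iff]
    rcases eq_or_ne i u0 with rfl | hi0
    · rcases eq_or_ne j u1 with rfl | hj1
      · exact ⟨u2, h02.symm, h12.symm⟩
      · exact ⟨u1, h01.symm, fun e => hj1 e.symm⟩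
    · rcases eq_or_ne j u0 with rfl | hj0
      · rcases eq_or_ne i u1 with rfl | hi1
        · exact ⟨u2, h12.symm, h02.symm⟩
        · exact ⟨u1, fun e => hi1 e.symm, h01.symm⟩
      · exact ⟨u0, fun e => hi0 e.symm, fun e => hj0 e.symm⟩
  have hall : ∀ X : Matrix (Fin n) (Fin n) k, ∃ Y, A⁻¹ * Φ X * A = Φ Y := by
    intro X
    have hSO : ∀ X : Matrix (Fin n) (Fin n) k,
        Xᵀ * diagonal M.diag * X = diagonal M.diag → X.det = 1 → X ∈ S := by
      intro X h1 h2
      rw [← hMd] at h1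
      obtain ⟨X', -, -, h⟩ := hinv X h1 h2
      exact ⟨X', h⟩
    exact span_so hchar M.diag hm (fun s t => hfriendly s t) h3 S hSO X
  choose φ hφ using hall
  -- recovering Φ X from φ X
  have hrec : ∀ X, Φ X = A * Φ (φ X) * A⁻¹ := by
    intro X
    rw [← hφ X]
    calc Φ X = 1 * Φ X * 1 := by rw [Matrix.one_mul, Matrix.mul_one]
      _ = (A * A⁻¹) * Φ X * (A * A⁻¹) := by rw [hAr]
      _ = A * (A⁻¹ * Φ X * A) * A⁻¹ := by noncomm_ring
  have hφ0 : φ 0 = 0 := by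
    apply hΦinj
    rw [← hφ 0]
    simp
  have hφmul : ∀ X Y, φ (X * Y) = φ X * φ Y := by
    intro X Y
    apply hΦinj
    rw [← hφ (X * Y), _root_.map_mul, _root_.map_mul, ← hφ X, ← hφ Y]
    calc A⁻¹ * (Φ X * Φ Y) * A = A⁻¹ * Φ X * (A * A⁻¹) * Φ Y * A := by rw [hAr]; noncomm_ring
      _ = A⁻¹ * Φ X * A * (A⁻¹ * Φ Y * A) := by noncomm_ring
  have hφadd : ∀ X Y, φ (X + Y) = φ X + φ Y := by
    intro X Y
    apply hΦinj
    rw [← hφ (X + Y), map_add, map_add, ← hφ X, ← hφ Y, Matrix.mul_add, Matrix.add_mul]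
  have hφsm : ∀ (c : k) X, φ (c • X) = c • φ X := by
    intro c X
    apply hΦinj
    rw [← hφ (c • X), hΦapp, hΦapp, map_smul_alg, map_smul_alg, Matrix.mul_smul,
      Matrix.smul_mul, ← hΦapp, ← hΦapp, hφ X]
  set E : Fin n → Fin n → Matrix (Fin n) (Fin n) k := fun p q => single p q 1
    with hEdef
  have hE0 : φ (E i0 i0) ≠ 0 := by
    intro h
    have h2 := hrec (E i0 i0)
    rw [h, map_zero, Matrix.mul_zero, Matrix.zero_mul] at h2
    have h3 : E i0 i0 = 0 := hΦinj (h2.trans (map_zero Φ).symm)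
    have h4 : (1 : k) = 0 := by
      have := congrFun (congrFun h3 i0) i0
      simpa [hEdef] using this
    exact one_ne_zero h4
  obtain ⟨a, b, hab⟩ : ∃ a b, φ (E i0 i0) a b ≠ 0 := by
    by_contra hcon
    push_neg at hcon
    exact hE0 (by ext r s; simpa using hcon r s)
  set W : Matrix (Fin n) (Fin n) k := φ (E i0 i0) * single b i0 1 with hWdef
  set P : Matrix (Fin n) (Fin n) k :=
    ∑ c : Fin n, φ (E c i0) * W * single i0 c 1 with hPdef
  have hEmul : ∀ p q r s : Fin n, q = r → E p q * E r s = E p s := by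
    rintro p q r s rfl
    simp [hEdef, single_mul_single_same]
  have hEmul' : ∀ p q r s : Fin n, q ≠ r → E p q * E r s = 0 := by
    intro p q r s h
    simp [hEdef, single_mul_single_of_ne _ _ _ _ h]
  have hkeyE : ∀ p q, φ (E p q) * P = P * E p q := by
    intro p q
    rw [hPdef, Finset.mul_sum, Finset.sum_mul]
    rw [Finset.sum_eq_single q (fun c _ hc => by
        rw [← Matrix.mul_assoc, ← Matrix.mul_assoc, ← hφmul, hEmul' p q c i0 (Ne.symm hc), hφ0,
          Matrix.zero_mul, Matrix.zero_mul]) (fun h => absurd (Finset.mem_univ q) h)]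
    rw [Finset.sum_eq_single p (fun c _ hc => by
        rw [Matrix.mul_assoc (φ (E c i0) * W), hEmul' i0 c p q hc, Matrix.mul_zero]) 
      (fun h => absurd (Finset.mem_univ p) h)]
    rw [← Matrix.mul_assoc, ← Matrix.mul_assoc, ← hφmul, hEmul p q q i0 rfl,
      Matrix.mul_assoc (φ (E p i0) * W), hEmul i0 p p q rfl]
  have hkey : ∀ X : Matrix (Fin n) (Fin n) k, φ X * P = P * X := by
    intro X
    have hXr := matrix_eq_sum_single X
    set φ' : Matrix (Fin n) (Fin n) k →+ Matrix (Fin n) (Fin n) k :=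
      AddMonoidHom.mk' φ (fun X Y => hφadd X Y) with hφ'def
    have hφ'app : ∀ X, φ' X = φ X := fun _ => rfl
    conv_lhs => rw [hXr]
    conv_rhs => rw [hXr]
    rw [← hφ'app, map_sum, Finset.sum_mul, Finset.mul_sum]
    refine Finset.sum_congr rfl (fun p _ => ?_)
    rw [map_sum, Finset.sum_mul, Finset.mul_sum]
    refine Finset.sum_congr rfl (fun q _ => ?_)
    have hsb : single p q (X p q) = X p q • E p q := by
      rw [hEdef, smul_single, smul_eq_mul, mul_one]
    rw [hφ'app, hsb, hφsm, Matrix.smul_mul, hkeyE, Matrix.mul_smul]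
  -- move to K
  have hQcomm : ∀ p q : Fin n, Commute (single p q (1:K)) (A * Φ P) := by
    intro p q
    have h1 := congrArg Φ (hkey (E p q))
    rw [_root_.map_mul, _root_.map_mul, ← hφ] at h1
    -- h1 : A⁻¹ * Φ (E p q) * A * Φ P = Φ P * Φ (E p q)
    have h2 : Φ (E p q) * (A * Φ P) = (A * Φ P) * Φ (E p q) := by
      calc Φ (E p q) * (A * Φ P) = (A * A⁻¹) * Φ (E p q) * (A * Φ P) := by
            rw [hAr, Matrix.one_mul]
        _ = A * (A⁻¹ * Φ (E p q) * A * Φ P) := by noncomm_ring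
        _ = A * (Φ P * Φ (E p q)) := by rw [h1]
        _ = (A * Φ P) * Φ (E p q) := by noncomm_ring
    have hΦE : Φ (E p q) = single p q (1:K) := by
      rw [hΦapp, hEdef]
      exact map_std_alg p q
    rw [hΦE] at h2
    exact h2
  obtain ⟨q0, hq0⟩ := mem_range_scalar_of_commute_single
    (fun p q _ => hQcomm p q)
  have hQ : A * Φ P = q0 • (1 : Matrix (Fin n) (Fin n) K) := by
    rw [← hq0, scalar_apply]
    ext r s
    by_cases h : r = s <;> simp [diagonal_apply, one_apply, h]
  -- P is nonzero
  have hPa : P a i0 = φ (E i0 i0) a b := by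
    rw [hPdef, Matrix.sum_apply]
    rw [Finset.sum_eq_single i0 (fun c _ hc =>
        mul_single_apply_of_ne 1 i0 c a i0 (Ne.symm hc) _)
      (fun h => absurd (Finset.mem_univ i0) h)]
    rw [mul_single_apply_same, hWdef, ← Matrix.mul_assoc, ← hφmul,
      hEmul i0 i0 i0 i0 rfl, mul_single_apply_same, mul_one, mul_one]
  have hP0 : P ≠ 0 := by
    intro h
    rw [h] at hPa
    exact hab (by rw [← hPa]; rfl)
  have hq0ne : q0 ≠ 0 := by
    intro h
    rw [h, zero_smul] at hQ
    have h2 : Φ P = 0 := by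
      calc Φ P = (A⁻¹ * A) * Φ P := by rw [hAl, Matrix.one_mul]
        _ = A⁻¹ * (A * Φ P) := by rw [Matrix.mul_assoc]
        _ = 0 := by rw [hQ, Matrix.mul_zero]
    exact hP0 (hΦinj (h2.trans (map_zero Φ).symm))
  -- P is invertible
  have hdetP : IsUnit P.det := by
    have hdet : A.det * (Φ P).det = q0 ^ n := by
      rw [← det_mul, hQ, det_smul, det_one, mul_one, Fintype.card_fin]
    have hne : (Φ P).det ≠ 0 := by
      intro h
      rw [h, mul_zero] at hdet
      exact pow_ne_zero n hq0ne hdet.symm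
    have hmapdet : (Φ P).det = f P.det := (f.map_det P).symm
    rw [hmapdet] at hne
    rw [isUnit_iff_ne_zero]
    intro h
    exact hne (by rw [h, map_zero])
  have hPC : P * P⁻¹ = 1 := mul_nonsing_inv P hdetP
  have hA_eq : A = q0 • Φ P⁻¹ := by
    have h1 : Φ P * Φ P⁻¹ = 1 := by rw [← _root_.map_mul, hPC, _root_.map_one]
    calc A = A * (Φ P * Φ P⁻¹) := by rw [h1, Matrix.mul_one]
      _ = (A * Φ P) * Φ P⁻¹ := by rw [Matrix.mul_assoc]
      _ = (q0 • (1 : Matrix (Fin n) (Fin n) K)) * Φ P⁻¹ := by rw [hQ]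
      _ = q0 • Φ P⁻¹ := by rw [Matrix.smul_mul, Matrix.one_mul]
  set C : Matrix (Fin n) (Fin n) k := P⁻¹ with hCdef
  have horth2 : (q0 * q0) • Φ (Cᵀ * M * C) = Φ M := by
    have h1 := hAorth
    rw [hA_eq] at h1
    rw [_root_.map_mul, _root_.map_mul, hΦapp, hΦapp, hΦapp, Matrix.transpose_map]
    calc (q0 * q0) • ((C.map f)ᵀ * (M.map f) * (C.map f))
        = (q0 • (C.map f))ᵀ * M.map f * (q0 • (C.map f)) := by
          rw [Matrix.transpose_smul, Matrix.smul_mul, Matrix.smul_mul, Matrix.mul_smul,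
            smul_smul]
      _ = M.map f := h1
  have hMii : M i0 i0 ≠ 0 := hm i0
  set t : k := (Cᵀ * M * C) i0 i0 with htdef
  have hentry : (q0 * q0) * f t = f (M i0 i0) := by
    have h1 := congrFun (congrFun horth2 i0) i0
    simp only [Matrix.smul_apply, smul_eq_mul, hΦapp, Matrix.map_apply] at h1
    exact h1
  have ht : t ≠ 0 := by
    intro h
    rw [h, map_zero, mul_zero] at hentry
    exact hMii (hfinj (by rw [← hentry, map_zero]))
  have hft : f t ≠ 0 := fun h => ht (hfinj (by rw [h, map_zero]))
  refine ⟨M i0 i0 / t, div_ne_zero hMii ht, q0, ?_, C, ?_⟩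
  · rw [hfdef] at hentry hft ⊢
    rw [map_div₀, pow_two, eq_div_iff hft]
    exact hentry
  · rw [hA_eq, hΦapp, hCdef]
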